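/- In a partial cube, every equivalence class of edges with respect to the Djoković–Winkler relation Θ is an inclusion-minimal edge cut: removing the class disconnects the graph, and no proper subset of the class disconnects the graph. -/

import Mathlib

open SimpleGraph

/-- The hypercube graph `Q_d` on `{0,1}^d`: two vertices are adjacent iff they
differ in exactly one coordinate. -/
def hypercubeGraph (d : ℕ) : SimpleGraph (Fin d → Bool) where
  Adj x y := hammingDist x y = 1
  symm := by
    constructor
    intro x y h
    rwa [hammingDist_comm]
  loopless := by
    constructor
    intro x h
    simp [hammingDist_self] at h

/-- A partial cube: a connected simple graph admitting an isometric embedding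
into some hypercube. -/
def IsPartialCube {V : Type} (G : SimpleGraph V) : Prop :=
  G.Connected ∧
    ∃ (d : ℕ) (φ : V → (Fin d → Bool)), Function.Injective φ ∧
      ∀ v w : V, (hypercubeGraph d).dist (φ v) (φ w) = G.dist v w

/-- The Djoković–Winkler relation `Θ` on (unordered) edges: `e = xy` and
`f = uv` are related iff `d(x,u) + d(y,v) ≠ d(x,v) + d(y,u)`. -/
def DWRel {V : Type} (G : SimpleGraph V) (e f : Sym2 V) : Prop :=
  ∃ x y u v : V, e = s(x, y) ∧ f = s(u, v) ∧
    G.dist x u + G.dist y v ≠ G.dist x v + G.dist y u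

/-- A `Θ`-class of `G`: the set of all edges of `G` related to some fixed edge
`e` of `G` by the Djoković–Winkler relation. -/
def IsThetaClass {V : Type} (G : SimpleGraph V) (C : Set (Sym2 V)) : Prop :=
  ∃ e ∈ G.edgeSet, C = {f | f ∈ G.edgeSet ∧ DWRel G e f}

namespace PCAux

variable {d : ℕ}

lemma hamming_eq_sum (x y : Fin d → Bool) :
    hammingDist x y = ∑ k : Fin d, (if x k ≠ y k then 1 else 0) := by
  rw [hammingDist, Finset.card_filter]

/-- `x` and `y` differ exactly at coordinate `i`. -/
def Flip (x y : Fin d → Bool) (i : Fin d) : Prop :=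
  x i ≠ y i ∧ ∀ k, k ≠ i → x k = y k

lemma Flip.symm {x y : Fin d → Bool} {i : Fin d} (h : Flip x y i) : Flip y x i :=
  ⟨fun he => h.1 he.symm, fun k hk => (h.2 k hk).symm⟩

lemma flip_of_hamming_one {x y : Fin d → Bool} (h : hammingDist x y = 1) :
    ∃ i, Flip x y i := by
  rw [hammingDist, Finset.card_eq_one] at h
  obtain ⟨i, hi⟩ := h
  refine ⟨i, ?_, ?_⟩
  · have : i ∈ ({i} : Finset (Fin d)) := Finset.mem_singleton_self i
    rw [← hi, Finset.mem_filter] at this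
    exact this.2
  · intro k hk
    by_contra hne
    have hmem : k ∈ Finset.filter (fun j => x j ≠ y j) Finset.univ := by
      simp [hne]
    rw [hi, Finset.mem_singleton] at hmem
    exact hk hmem

lemma hamming_one_of_flip {x y : Fin d → Bool} {i : Fin d} (h : Flip x y i) :
    hammingDist x y = 1 := by
  rw [hammingDist, Finset.card_eq_one]
  refine ⟨i, ?_⟩
  ext k
  simp only [Finset.mem_filter, Finset.mem_univ, true_and, Finset.mem_singleton]
  constructor
  · intro hk
    by_contra hki
    exact hk (h.2 k hki)
  · rintro rfl
    exact h.1

lemma sum_eq_of_flips {x y u v : Fin d → Bool} {i j : Fin d}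
    (hxy : Flip x y i) (huv : Flip u v j) (hij : i ≠ j) :
    hammingDist x u + hammingDist y v = hammingDist x v + hammingDist y u := by
  simp only [hamming_eq_sum, ← Finset.sum_add_distrib]
  apply Finset.sum_congr rfl
  intro k _
  rcases eq_or_ne k i with rfl | hki
  · have h2 := huv.2 k hij
    rw [← h2]
  · rcases eq_or_ne k j with rfl | hkj
    · have h1 := hxy.2 k hki
      rw [← h1]
      exact Nat.add_comm _ _
    · rw [← hxy.2 k hki, ← huv.2 k hkj]

lemma sum_ne_of_flips {x y u v : Fin d → Bool} {i : Fin d}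
    (hxy : Flip x y i) (huv : Flip u v i) :
    hammingDist x u + hammingDist y v ≠ hammingDist x v + hammingDist y u := by
  simp only [hamming_eq_sum, ← Finset.sum_add_distrib]
  rw [Finset.sum_eq_sum_sdiff_singleton_add (Finset.mem_univ i),
      Finset.sum_eq_sum_sdiff_singleton_add (Finset.mem_univ i)]
  have hrest :
      (∑ k ∈ Finset.univ \ {i},
        ((if x k ≠ u k then 1 else 0) + if y k ≠ v k then 1 else 0)) =
      ∑ k ∈ Finset.univ \ {i},
        ((if x k ≠ v k then 1 else 0) + if y k ≠ u k then 1 else 0) := by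
    apply Finset.sum_congr rfl
    intro k hk
    have hki : k ≠ i := by
      simpa using (Finset.mem_sdiff.mp hk).2
    rw [← hxy.2 k hki, ← huv.2 k hki]
  rw [hrest]
  intro h
  have h2 : ((if x i ≠ u i then 1 else 0) + if y i ≠ v i then 1 else 0 : ℕ) =
      (if x i ≠ v i then 1 else 0) + if y i ≠ u i then 1 else 0 :=
    Nat.add_left_cancel h
  have hx := hxy.1
  have hu := huv.1
  revert h2 hx hu
  cases hxi : x i <;> cases hyi : y i <;> cases hui : u i <;> cases hvi : v i <;> simp

lemma hamming_flip_add_one {p p' q : Fin d → Bool} {i : Fin d}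
    (h : Flip p p' i) (hq : p i = q i) :
    hammingDist p' q = hammingDist p q + 1 := by
  simp only [hamming_eq_sum]
  rw [Finset.sum_eq_sum_sdiff_singleton_add (Finset.mem_univ i),
      Finset.sum_eq_sum_sdiff_singleton_add (Finset.mem_univ i)]
  have hrest :
      (∑ k ∈ Finset.univ \ {i}, (if p' k ≠ q k then 1 else 0)) =
      ∑ k ∈ Finset.univ \ {i}, (if p k ≠ q k then 1 else 0) := by
    apply Finset.sum_congr rfl
    intro k hk
    have hki : k ≠ i := by
      simpa using (Finset.mem_sdiff.mp hk).2
    rw [← h.2 k hki]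
  rw [hrest]
  have h1 : p' i ≠ q i := by
    rw [← hq]
    exact fun e => h.1 e.symm
  rw [if_pos h1, if_neg (by simp [hq] : ¬ p i ≠ q i)]

lemma hypercube_walk : ∀ (n : ℕ) (p q : Fin d → Bool), hammingDist p q = n →
    ∃ w : (hypercubeGraph d).Walk p q, w.length = n := by
  intro n
  induction n with
  | zero =>
    intro p q h
    rw [hammingDist_eq_zero] at h
    subst h
    exact ⟨SimpleGraph.Walk.nil, rfl⟩
  | succ n ih =>
    intro p q h
    have hne : p ≠ q := by
      intro e
      subst e
      simp [hammingDist_self] at h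
    have hex : ∃ i, p i ≠ q i := by
      by_contra hc
      push_neg at hc
      exact hne (funext hc)
    obtain ⟨i, hi⟩ := hex
    set p' := Function.update p i (q i) with hp'
    have hflip : Flip p p' i := by
      constructor
      · simpa [hp', Function.update_self] using hi
      · intro k hk
        simp [hp', Function.update_of_ne hk]
    have hadj : (hypercubeGraph d).Adj p p' := hamming_one_of_flip hflip
    have hpq : hammingDist p q = hammingDist p' q + 1 := by
      apply hamming_flip_add_one hflip.symm
      simp [hp', Function.update_self]
    have hst : hammingDist p' q = n := by omega
    obtain ⟨w, hw⟩ := ih p' q hst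
    exact ⟨SimpleGraph.Walk.cons hadj w, by simp [hw]⟩

lemma hamming_le_walk {p q : Fin d → Bool} (w : (hypercubeGraph d).Walk p q) :
    hammingDist p q ≤ w.length := by
  induction w with
  | nil => simp
  | @cons a b c h w ih =>
    have ht := hammingDist_triangle a b c
    have hab : hammingDist a b = 1 := h
    simp only [SimpleGraph.Walk.length_cons]
    omega

lemma hypercube_dist (p q : Fin d → Bool) :
    (hypercubeGraph d).dist p q = hammingDist p q := by
  obtain ⟨w, hw⟩ := hypercube_walk (hammingDist p q) p q rfl
  have h1 : (hypercubeGraph d).dist p q ≤ hammingDist p q := hw ▸ SimpleGraph.dist_le w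
  have hr : (hypercubeGraph d).Reachable p q := ⟨w⟩
  obtain ⟨w', hw'⟩ := hr.exists_walk_length_eq_dist
  have h2 : hammingDist p q ≤ (hypercubeGraph d).dist p q := hw' ▸ hamming_le_walk w'
  omega

end PCAux

open PCAux in
/-- In a partial cube, every `Θ`-class is an inclusion-minimal edge cut:
removing it disconnects the graph, but removing any proper subset of it does
not. -/
theorem thetaClass_minimal_edge_cut {V : Type} (H : SimpleGraph V)
    (hH : IsPartialCube H) (C : Set (Sym2 V)) (hC : IsThetaClass H C) :
    ¬ (H.deleteEdges C).Connected ∧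
    ∀ C' ⊂ C, (H.deleteEdges C').Connected := by
  obtain ⟨hconn, d, φ, hinj, hiso⟩ := hH
  obtain ⟨e, he, hCeq⟩ := hC
  have hdist : ∀ v w : V, hammingDist (φ v) (φ w) = H.dist v w := fun v w => by
    rw [← hiso, hypercube_dist]
  revert he hCeq
  induction e using Sym2.ind with
  | _ x y =>
  intro he hCeq
  have hxy : H.Adj x y := (H.mem_edgeSet).mp he
  have adjFlip : ∀ a b : V, H.Adj a b → ∃ j, Flip (φ a) (φ b) j := fun a b hab =>
    flip_of_hamming_one (by rw [hdist]; exact SimpleGraph.dist_eq_one_iff_adj.mpr hab)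
  obtain ⟨i, hfe⟩ := adjFlip x y hxy
  have memC : ∀ (a b : V) (j : Fin d), H.Adj a b → Flip (φ a) (φ b) j →
      (s(a, b) ∈ C ↔ j = i) := by
    intro a b j hab hf
    rw [hCeq]
    constructor
    · rintro ⟨_, hDW⟩
      obtain ⟨x', y', u', v', hxy', huv', hne⟩ := hDW
      by_contra hji
      apply hne
      have hf1 : Flip (φ x') (φ y') i := by
        rcases Sym2.eq_iff.mp hxy' with ⟨rfl, rfl⟩ | ⟨rfl, rfl⟩
        exacts [hfe, hfe.symm]
      have hf2 : Flip (φ u') (φ v') j := by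
        rcases Sym2.eq_iff.mp huv' with ⟨rfl, rfl⟩ | ⟨rfl, rfl⟩
        exacts [hf, hf.symm]
      have := sum_eq_of_flips hf1 hf2 (Ne.symm hji)
      simpa only [hdist] using this
    · rintro rfl
      refine ⟨(H.mem_edgeSet).mpr hab, x, y, a, b, rfl, rfl, ?_⟩
      have := sum_ne_of_flips hfe hf
      simpa only [hdist] using this
  constructor
  · -- deleting C disconnects
    have hinv : ∀ {a b : V}, (H.deleteEdges C).Adj a b → φ a i = φ b i := by
      intro a b hab
      rw [SimpleGraph.deleteEdges_adj] at hab
      obtain ⟨j, hj⟩ := adjFlip a b hab.1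
      have hji : j ≠ i := fun h => hab.2 ((memC a b j hab.1 hj).mpr h)
      exact hj.2 i (Ne.symm hji)
    have hwalkinv : ∀ {a b : V}, (H.deleteEdges C).Walk a b → φ a i = φ b i := by
      intro a b w
      induction w with
      | nil => rfl
      | cons h w ih => exact (hinv h).trans ih
    intro hcon
    obtain ⟨w⟩ := hcon.preconnected x y
    exact hfe.1 (hwalkinv w)
  · -- no proper subset disconnects
    intro C' hC'
    have hsub : C' ⊆ C := hC'.subset
    obtain ⟨f, hfC, hfC'⟩ := Set.exists_of_ssubset hC'
    revert hfC hfC'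
    induction f using Sym2.ind with
    | _ u v =>
    intro hfC hfC'
    have hfC2 := hfC
    rw [hCeq] at hfC2
    have hfE : H.Adj u v := (H.mem_edgeSet).mp hfC2.1
    obtain ⟨j, hfuv⟩ := adjFlip u v hfE
    have hji : j = i := (memC u v j hfE hfuv).mp hfC
    subst hji
    have geo : ∀ n : ℕ, ∀ w z : V, H.dist w z = n → φ w j = φ z j →
        (H.deleteEdges C').Reachable w z := by
      intro n
      induction n using Nat.strong_induction_on with
      | _ n ih =>
        intro w z hdwz hphi
        rcases eq_or_ne w z with rfl | hwz
        · exact SimpleGraph.Reachable.refl w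
        · have hpos : 0 < H.dist w z := hconn.pos_dist_of_ne hwz
          obtain ⟨p, hp⟩ := (hconn.preconnected w z).exists_walk_length_eq_dist
          cases p with
          | nil => exact absurd rfl hwz
          | @cons _ w' _ h q =>
            have hlen : q.length + 1 = H.dist w z := by simpa using hp
            have hd' : H.dist w' z ≤ q.length := SimpleGraph.dist_le q
            obtain ⟨j', hj'⟩ := adjFlip w w' h
            have hj'i : j' ≠ j := by
              rintro rfl
              have hone := hamming_flip_add_one hj' hphi
              rw [hdist, hdist] at hone
              omega
            have hphi' : φ w' j = φ z j := by
              rw [← hj'.2 j (Ne.symm hj'i)]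
              exact hphi
            have hedge : (H.deleteEdges C').Adj w w' := by
              rw [SimpleGraph.deleteEdges_adj]
              refine ⟨h, fun hmem => ?_⟩
              exact hj'i ((memC _ _ _ h hj').mp (hsub hmem))
            have hrec : (H.deleteEdges C').Reachable w' z :=
              ih (H.dist w' z) (by omega) w' z rfl hphi'
            exact (hedge.reachable).trans hrec
    have reachu : ∀ a : V, (H.deleteEdges C').Reachable a u := by
      intro a
      by_cases hai : φ a j = φ u j
      · exact geo _ a u rfl hai
      · have hav : φ a j = φ v j := by
          have huvne := hfuv.1
          cases h1 : φ a j <;> cases h2 : φ u j <;> cases h3 : φ v j <;> simp_all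
        have h1 := geo _ a v rfl hav
        have hedgeuv : (H.deleteEdges C').Adj u v := by
          rw [SimpleGraph.deleteEdges_adj]
          exact ⟨hfE, hfC'⟩
        exact h1.trans hedgeuv.symm.reachable
    have : Nonempty V := hconn.nonempty
    exact ⟨fun a b => (reachu a).trans (reachu b).symm⟩
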